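/- Let $r_r, r_f, r_c, \mu_I, \mu_C$ be constants with $\eta := \mu_I + \mu_C - r_f > r_r$, $\alpha \in [0,1]$, $L_I, L_C \in [0,1]$, $T > 0$. Define $K(t) = \frac{1 - e^{-(\eta - r_r)(T-t)}}{\eta - r_r}$ and, for a function $\hat V: [0,T] \to \mathbb{R}$ satisfying $\hat V'(t) = r_r \hat V(t)$, set $u(t) = \big((r_r - r_f) + \alpha(r_f - r_c)\big)K(t)\hat V(t) + (\mu_C - r_f)L_C K(t)\big((1-\alpha)\hat V(t)\big)^- - (\mu_I - r_f)L_I K(t)\big((1-\alpha)\hat V(t)\big)^+$. Then $u$ satisfies $-u'(t) = (r_f - r_c)\alpha \hat V(t) + (r_r - r_f)\hat V(t) + (\mu_I - r_f)\tilde\theta_I(\hat V(t)) + (\mu_C - r_f)\tilde\theta_C(\hat V(t)) - \eta u(t)$ with $u(T) = 0$, where $\tilde\theta_I(v) = -L_I((1-\alpha)v)^+$ and $\tilde\theta_C(v) = L_C((1-\alpha)v)^-$. -/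

import Mathlib

/-- The kernel K(t) = (1 - e^{-(η-r_r)(T-t)})/(η-r_r). -/
noncomputable def Kker (η rr T t : ℝ) : ℝ :=
  (1 - Real.exp (-(η - rr) * (T - t))) / (η - rr)

/-- The explicit XVA in Piterbarg's model with defaults. -/
noncomputable def xvaDef (rr rf rc μI μC α L_I L_C T : ℝ) (V : ℝ → ℝ) (t : ℝ) : ℝ :=
  ((rr - rf) + α * (rf - rc)) * Kker (μI + μC - rf) rr T t * V t
    + (μC - rf) * L_C * Kker (μI + μC - rf) rr T t * max (-((1 - α) * V t)) 0
    - (μI - rf) * L_I * Kker (μI + μC - rf) rr T t * max ((1 - α) * V t) 0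

lemma Kker_deriv (η rr T : ℝ) (hne : η - rr ≠ 0) (t : ℝ) :
    HasDerivAt (fun s => Kker η rr T s) (-Real.exp (-(η - rr) * (T - t))) t := by
  have h1 : HasDerivAt (fun s : ℝ => T - s) (-1) t := by
    simpa using (hasDerivAt_id t).const_sub T
  have h2 : HasDerivAt (fun s : ℝ => -(η - rr) * (T - s)) (η - rr) t := by
    have := h1.const_mul (-(η - rr))
    simpa using this
  have h3 := h2.exp
  have h4 := (h3.const_sub 1).div_const (η - rr)
  unfold Kker
  refine h4.congr_deriv ?_
  field_simp

lemma key_deriv (η rr T : ℝ) (hne : η - rr ≠ 0) (c : ℝ) (V : ℝ → ℝ)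
    (hV : ∀ t, HasDerivAt V (rr * V t) t) (t : ℝ) :
    HasDerivAt (fun s => c * Kker η rr T s * V s)
      (η * (c * Kker η rr T t * V t) - c * V t) t := by
  have hK := Kker_deriv η rr T hne t
  have h := ((hK.const_mul c).mul (hV t))
  have heq : c * -Real.exp (-(η - rr) * (T - t)) * V t
      + c * Kker η rr T t * (rr * V t)
      = η * (c * Kker η rr T t * V t) - c * V t := by
    unfold Kker
    field_simp
    ring
  rw [← heq]
  exact h

lemma V_form (rr : ℝ) (V : ℝ → ℝ) (hV : ∀ t, HasDerivAt V (rr * V t) t) (t : ℝ) :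
    V t = V 0 * Real.exp (rr * t) := by
  have hg : ∀ s : ℝ, HasDerivAt (fun u => V u * Real.exp (-rr * u)) 0 s := by
    intro s
    have h1 : HasDerivAt (fun u : ℝ => Real.exp (-rr * u)) (-rr * Real.exp (-rr * s)) s := by
      simpa [mul_comm] using ((hasDerivAt_id s).const_mul (-rr)).exp
    have := (hV s).mul h1
    refine this.congr_deriv ?_
    ring
  have hconst : (fun u => V u * Real.exp (-rr * u)) t
      = (fun u => V u * Real.exp (-rr * u)) 0 :=
    is_const_of_deriv_eq_zero (fun s => (hg s).differentiableAt)
      (fun s => (hg s).deriv) t 0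
  simp only at hconst
  have : V t * Real.exp (-rr * t) = V 0 := by simpa using hconst
  have hpos : Real.exp (-rr * t) ≠ 0 := Real.exp_ne_zero _
  field_simp at this ⊢
  rw [← this]
  rw [mul_assoc, ← Real.exp_add]
  simp

/-- Deterministic verification of the explicit XVA formula in Piterbarg's model with
defaults: u solves the reduced linear ODE with terminal condition zero. -/
theorem piterbarg_defaults_ode (rr rf rc μI μC α L_I L_C T : ℝ)
    (hη : rr < μI + μC - rf) (hα : α ∈ Set.Icc (0 : ℝ) 1)
    (hI : L_I ∈ Set.Icc (0 : ℝ) 1) (hC : L_C ∈ Set.Icc (0 : ℝ) 1) (hT : 0 < T)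
    (V : ℝ → ℝ) (hVode : ∀ t, HasDerivAt V (rr * V t) t) :
    xvaDef rr rf rc μI μC α L_I L_C T V T = 0 ∧
    ∀ t, HasDerivAt (xvaDef rr rf rc μI μC α L_I L_C T V)
      (-((rf - rc) * α * V t + (rr - rf) * V t
          + (μI - rf) * (-(L_I * max ((1 - α) * V t) 0))
          + (μC - rf) * (L_C * max (-((1 - α) * V t)) 0)
          - (μI + μC - rf) * xvaDef rr rf rc μI μC α L_I L_C T V t)) t := by
  set η := μI + μC - rf with hηdef
  have hne : η - rr ≠ 0 := by linarith
  have h1α : (0:ℝ) ≤ 1 - α := by linarith [hα.2]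
  constructor
  · simp [xvaDef, Kker, ← hηdef]
  · intro t
    rcases le_total 0 (V 0) with hV0 | hV0
    · -- V nonneg everywhere
      have hVt : ∀ s, 0 ≤ V s := fun s => by
        rw [V_form rr V hVode s]
        exact mul_nonneg hV0 (Real.exp_nonneg _)
      have hmax1 : ∀ s, max ((1 - α) * V s) 0 = (1 - α) * V s := fun s =>
        max_eq_left (mul_nonneg h1α (hVt s))
      have hmax2 : ∀ s, max (-((1 - α) * V s)) 0 = 0 := fun s =>
        max_eq_right (neg_nonpos.mpr (mul_nonneg h1α (hVt s)))
      set c := (rr - rf) + α * (rf - rc) - (μI - rf) * L_I * (1 - α) with hc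
      have hform : ∀ s, xvaDef rr rf rc μI μC α L_I L_C T V s
          = c * Kker η rr T s * V s := fun s => by
        simp only [xvaDef, hmax1, hmax2, ← hηdef]; ring
      have hd := key_deriv η rr T hne c V hVode t
      have : HasDerivAt (xvaDef rr rf rc μI μC α L_I L_C T V)
          (η * (c * Kker η rr T t * V t) - c * V t) t :=
        hd.congr_of_eventuallyEq (Filter.Eventually.of_forall hform)
      convert this using 1
      rw [hform t, hmax1 t, hmax2 t, hc]
      ring
    · -- V nonpos everywhere
      have hVt : ∀ s, V s ≤ 0 := fun s => by
        rw [V_form rr V hVode s]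
        exact mul_nonpos_of_nonpos_of_nonneg hV0 (Real.exp_nonneg _)
      have hmax1 : ∀ s, max ((1 - α) * V s) 0 = 0 := fun s =>
        max_eq_right (mul_nonpos_of_nonneg_of_nonpos h1α (hVt s))
      have hmax2 : ∀ s, max (-((1 - α) * V s)) 0 = -((1 - α) * V s) := fun s =>
        max_eq_left (neg_nonneg.mpr (mul_nonpos_of_nonneg_of_nonpos h1α (hVt s)))
      set c := (rr - rf) + α * (rf - rc) - (μC - rf) * L_C * (1 - α) with hc
      have hform : ∀ s, xvaDef rr rf rc μI μC α L_I L_C T V s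
          = c * Kker η rr T s * V s := fun s => by
        simp only [xvaDef, hmax1, hmax2, ← hηdef]; ring
      have hd := key_deriv η rr T hne c V hVode t
      have : HasDerivAt (xvaDef rr rf rc μI μC α L_I L_C T V)
          (η * (c * Kker η rr T t * V t) - c * V t) t :=
        hd.congr_of_eventuallyEq (Filter.Eventually.of_forall hform)
      convert this using 1
      rw [hform t, hmax1 t, hmax2 t, hc]
      ring
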